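/- Let ψ be the function defined in the context. Then for every r ≥ 0 one has min{ c1, ψ(2l0)/(4 l0), a/4 } · r ≤ ψ(r) ≤ (1 + c1) r, where a = ψ'(2l0) = c1 + exp(−c2 g(2l0)). -/
import Mathlib


open Set Filter MeasureTheory

/-- Lemma 4.1(3) of the paper: min{c1, ψ(2l0)/(4l0), a/4} r ≤ ψ(r) ≤ (1+c1) r for r ≥ 0. -/
theorem stmt_3
    (l0 c1 c2 : ℝ) (hl0 : 0 < l0) (hc1 : 0 < c1) (hc2 : 0 < c2)
    (g ψ : ℝ → ℝ)
    (hg_cont : ContinuousOn g (Icc 0 (2 * l0)))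
    (hg_smooth : ContDiffOn ℝ 3 g (Ioc 0 (2 * l0)))
    (hg0 : g 0 = 0)
    (hg1 : ∀ r ∈ Ioc 0 (2 * l0), 0 ≤ deriv g r)
    (hg2 : ∀ r ∈ Ioc 0 (2 * l0), deriv (deriv g) r ≤ 0)
    (hg3 : ∀ r ∈ Ioc 0 (2 * l0), 0 ≤ deriv (deriv (deriv g)) r)
    (a b : ℝ)
    (ha : a = c1 + Real.exp (-(c2 * g (2 * l0))))
    (hb : b = -(c2 * deriv g (2 * l0) * Real.exp (-(c2 * g (2 * l0)))))
    (hψ1 : ∀ r ≤ 2 * l0, ψ r = c1 * r + ∫ s in (0:ℝ)..r, Real.exp (-(c2 * g s)))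
    (hψ2 : ∀ r, 2 * l0 < r →
      ψ r = ψ (2 * l0) + (a / 2) * ∫ s in (0:ℝ)..(r - 2 * l0), (1 + Real.exp ((2 * b / a) * s))) :
    ∀ r : ℝ, 0 ≤ r →
      min (min c1 (ψ (2 * l0) / (4 * l0))) (a / 4) * r ≤ ψ r ∧ ψ r ≤ (1 + c1) * r := by
  have ha0 : 0 < a := by rw [ha]; positivity
  -- g is monotone on [0, 2l0]
  have hmono : MonotoneOn g (Icc 0 (2 * l0)) := by
    apply monotoneOn_of_deriv_nonneg (convex_Icc _ _) hg_cont
    · intro x hx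
      rw [interior_Icc] at hx
      exact ((hg_smooth.contDiffAt (mem_of_superset (Ioo_mem_nhds hx.1 hx.2)
        Ioo_subset_Ioc_self)).differentiableAt (by norm_num)).differentiableWithinAt
    · intro x hx
      rw [interior_Icc] at hx
      exact hg1 x ⟨hx.1, hx.2.le⟩
  have hgnn : ∀ s ∈ Icc (0:ℝ) (2 * l0), 0 ≤ g s := by
    intro s hs
    have := hmono (left_mem_Icc.mpr (by linarith)) hs hs.1
    rwa [hg0] at this
  have hcontF : ContinuousOn (fun s => Real.exp (-(c2 * g s))) (Icc 0 (2 * l0)) :=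
    Real.continuous_exp.comp_continuousOn ((continuousOn_const.mul hg_cont).neg)
  -- bounds on ψ for r in [0, 2l0]
  have hmain : ∀ r, 0 ≤ r → r ≤ 2 * l0 → c1 * r ≤ ψ r ∧ ψ r ≤ (1 + c1) * r := by
    intro r hr hr2
    have hsub : Icc (0:ℝ) r ⊆ Icc 0 (2 * l0) := Icc_subset_Icc le_rfl hr2
    have hint : IntervalIntegrable (fun s => Real.exp (-(c2 * g s))) volume 0 r := by
      apply ContinuousOn.intervalIntegrable
      rw [uIcc_of_le hr]
      exact hcontF.mono hsub
    have hInn : 0 ≤ ∫ s in (0:ℝ)..r, Real.exp (-(c2 * g s)) :=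
      intervalIntegral.integral_nonneg hr (fun x _ => (Real.exp_pos _).le)
    have hIle : (∫ s in (0:ℝ)..r, Real.exp (-(c2 * g s))) ≤ r := by
      calc (∫ s in (0:ℝ)..r, Real.exp (-(c2 * g s)))
          ≤ ∫ _ in (0:ℝ)..r, (1:ℝ) := by
            apply intervalIntegral.integral_mono_on hr hint intervalIntegrable_const
            intro x hx
            rw [Real.exp_le_one_iff]
            have := hgnn x (hsub hx)
            nlinarith
        _ = r := by simp
    rw [hψ1 r hr2]
    constructor <;> nlinarith
  have hP := hmain (2 * l0) (by linarith) le_rfl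
  set P := ψ (2 * l0) with hPdef
  have hPnn : 0 ≤ P := by nlinarith [hP.1]
  intro r hr
  rcases le_or_gt r (2 * l0) with hcase | hcase
  · have h := hmain r hr hcase
    refine ⟨?_, h.2⟩
    have hmle : min (min c1 (P / (4 * l0))) (a / 4) ≤ c1 :=
      le_trans (min_le_left _ _) (min_le_left _ _)
    nlinarith [h.1]
  · -- r > 2l0
    set t := r - 2 * l0 with htdef
    have ht : 0 < t := by simp [htdef]; linarith
    have hb0 : b ≤ 0 := by
      have hd := hg1 (2 * l0) ⟨by linarith, le_rfl⟩
      have := mul_nonneg (mul_nonneg hc2.le hd) (Real.exp_pos (-(c2 * g (2 * l0)))).le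
      rw [hb]; linarith
    have hint : IntervalIntegrable (fun s => 1 + Real.exp ((2 * b / a) * s)) volume 0 t :=
      (continuous_const.add (Real.continuous_exp.comp (continuous_const.mul
        continuous_id))).intervalIntegrable _ _
    have hJle : (∫ s in (0:ℝ)..t, (1 + Real.exp ((2 * b / a) * s))) ≤ 2 * t := by
      calc (∫ s in (0:ℝ)..t, (1 + Real.exp ((2 * b / a) * s)))
          ≤ ∫ _ in (0:ℝ)..t, (2:ℝ) := by
            apply intervalIntegral.integral_mono_on ht.le hint intervalIntegrable_const
            intro x hx
            have h1 : (2 * b / a) * x ≤ 0 := by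
              have : 2 * b / a ≤ 0 := by
                rw [div_nonpos_iff]; right; constructor <;> linarith
              nlinarith [hx.1]
            have := Real.exp_le_one_iff.mpr h1
            linarith
        _ = 2 * t := by simp [mul_comm]
    have hJge : t ≤ ∫ s in (0:ℝ)..t, (1 + Real.exp ((2 * b / a) * s)) := by
      calc t = ∫ _ in (0:ℝ)..t, (1:ℝ) := by simp
        _ ≤ ∫ s in (0:ℝ)..t, (1 + Real.exp ((2 * b / a) * s)) := by
            apply intervalIntegral.integral_mono_on ht.le intervalIntegrable_const hint
            intro x _
            nlinarith [Real.exp_pos ((2 * b / a) * x)]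
    have hψr := hψ2 r hcase
    rw [← htdef] at hψr
    have haub : a ≤ 1 + c1 := by
      rw [ha]
      have := Real.exp_le_one_iff.mpr (show -(c2 * g (2 * l0)) ≤ 0 by
        nlinarith [hgnn (2 * l0) ⟨by linarith, le_rfl⟩])
      linarith
    constructor
    · rcases le_or_gt r (4 * l0) with hr4 | hr4
      · have hm2 : min (min c1 (P / (4 * l0))) (a / 4) ≤ P / (4 * l0) :=
          le_trans (min_le_left _ _) (min_le_right _ _)
        have hPr : P / (4 * l0) * r ≤ P := by
          rw [div_mul_eq_mul_div, div_le_iff₀ (by linarith)]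
          nlinarith
        have : min (min c1 (P / (4 * l0))) (a / 4) * r ≤ P / (4 * l0) * r :=
          mul_le_mul_of_nonneg_right hm2 hr
        nlinarith
      · have hm3 : min (min c1 (P / (4 * l0))) (a / 4) ≤ a / 4 := min_le_right _ _
        have : min (min c1 (P / (4 * l0))) (a / 4) * r ≤ a / 4 * r :=
          mul_le_mul_of_nonneg_right hm3 hr
        nlinarith
    · nlinarith [hP.2]
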